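/- arXiv:1903.06065 — 2 statements merged into one kernel-verified Lean document; each statement's English description precedes it below -/
import Mathlib

section
/- Filter the reduced cellular Z/2-chain complex C̃_*(C_m(Σ_{g,1})^∞) by assigning to a tuple h = (l, x, u, v) the norm Σ_{i=1}^l x_i; the norm is weakly decreasing along the differential, so the span F_p of tuples of norm ≤ p is a subcomplex. For each p, the filtration stratum F_p/F_{p−1} is isomorphic as a chain complex to a direct sum of copies of the reduced cellular chain complex C̃_*(C_p(D)^∞) of the configuration space of p points in the open disc, with degrees shifted by m−p: there is one copy for each partition m − p = Σ_{i=1}^g (u_i + v_i) with u_i, v_i ≥ 0. -/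
/-!
# Statement 4 (Bianchi, "Splitting of the homology of the punctured mapping class group")

Filter the reduced cellular `ℤ/2`-chain complex `C̃_*(C_m(Σ_{g,1})^∞)` by the norm
`Σ_{i=1}^l x_i` of a tuple `h = (l, x, u, v)`.  The norm is weakly decreasing along the
differential, so the span `F_p` of the tuples of norm `≤ p` is a subcomplex; for each `p`
the filtration stratum `F_p / F_{p−1}` is isomorphic, as a chain complex, to a direct sum of
copies of the reduced cellular chain complex `C̃_*(C_p(D)^∞)` of the configuration space of
`p` points in the open disc (the case `g = 0`), with degrees shifted by `m − p`: one copy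
for each partition `m − p = Σ_{i=1}^g (u_i + v_i)` with `u_i, v_i ≥ 0`.

The differential is the one computed in Lemma 3.2 (Statement 3), encoded by the explicit
coefficient function `cellCoef`.  The stratum isomorphism is encoded by a bijection of the
basis tuples of norm exactly `p` with pairs (partition `(u, v)` of `m − p`, disc tuple of
weight `p`), shifting dimensions by `m − p` and matching the induced differentials: on the
stratum only the norm-preserving (inner) boundaries survive, and they agree with the
differential of the disc complex on the `x`-part, separately in each copy.
-/


/-- A tuple `h = (l, x, u, v)` indexing a cell `e^h` of the CW structure on the one-point
compactification `C_m(Σ_{g,1})^∞`: a list `x = (x_1, …, x_l)` of positive integers (the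
numbers of configuration points on the `l` occupied vertical lines of the model square,
ordered from left to right) and vectors `u, v : Fin g → ℕ` (the numbers of configuration
points on the arcs `U_i`, `V_i`), with `Σ x_i + Σ (u_i + v_i) = m`. -/
structure ConfTuple (g m : ℕ) where
  /-- the numbers of points on the occupied vertical lines, from left to right -/
  x : List ℕ
  /-- the numbers of points on the arcs `U_1, …, U_g` -/
  u : Fin g → ℕ
  /-- the numbers of points on the arcs `V_1, …, V_g` -/
  v : Fin g → ℕ
  x_pos : ∀ a ∈ x, 1 ≤ a
  total : x.sum + (∑ i, (u i + v i)) = m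

namespace ConfTuple

variable {g m : ℕ}

/-- The dimension `m + l` of the cell `e^h`. -/
def dim (h : ConfTuple g m) : ℕ := m + h.x.length

/-- The filtration norm `Σ_{i=1}^l x_i` of the tuple `h`. -/
def fnorm (h : ConfTuple g m) : ℕ := h.x.sum

end ConfTuple

open scoped Classical

/-- The total contribution of the *inner boundaries* to the coefficient of `h'` in `∂h`:
for each `1 ≤ i ≤ l−1` such that `h'` is obtained from `h` by merging the consecutive
entries `x_i, x_{i+1}` into `x_i + x_{i+1}` (keeping `u` and `v`), the contribution is the
mod-2 binomial coefficient `binom(x_i + x_{i+1}, x_i)`. -/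
noncomputable def innerCoef {g m : ℕ} (h h' : ConfTuple g m) : ZMod 2 :=
  ∑ i ∈ Finset.range h.x.length,
    if i + 1 < h.x.length ∧ h'.u = h.u ∧ h'.v = h.v ∧
        h'.x = h.x.take i ++ (h.x.getD i 0 + h.x.getD (i + 1) 0) :: h.x.drop (i + 2)
    then (Nat.choose (h.x.getD i 0 + h.x.getD (i + 1) 0) (h.x.getD i 0) : ZMod 2)
    else 0

/-- The contribution of the *left outer boundary* to the coefficient of `h'` in `∂h`:
`h'` is obtained from `h` by deleting the first entry `x_1` of `x`, choosing a splitting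
`x_1 = Σ_i (ũ_i + ṽ_i)` and setting `u'_i = u_i + ũ_i`, `v'_i = v_i + ṽ_i`; the contribution
is `∏_i binom(u_i + ũ_i, u_i) · binom(v_i + ṽ_i, v_i)` mod 2. -/
noncomputable def leftCoef {g m : ℕ} (h h' : ConfTuple g m) : ZMod 2 :=
  if h.x ≠ [] ∧ h'.x = h.x.tail ∧ (∀ i, h.u i ≤ h'.u i ∧ h.v i ≤ h'.v i) ∧
      h.x.headD 0 = ∑ i, ((h'.u i - h.u i) + (h'.v i - h.v i))
  then ∏ i, ((Nat.choose (h'.u i) (h.u i) : ZMod 2) * (Nat.choose (h'.v i) (h.v i) : ZMod 2))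
  else 0

/-- The contribution of the *right outer boundary* to the coefficient of `h'` in `∂h`:
as for the left outer boundary, but deleting the last entry `x_l` of `x`. -/
noncomputable def rightCoef {g m : ℕ} (h h' : ConfTuple g m) : ZMod 2 :=
  if h.x ≠ [] ∧ h'.x = h.x.dropLast ∧ (∀ i, h.u i ≤ h'.u i ∧ h.v i ≤ h'.v i) ∧
      h.x.getLastD 0 = ∑ i, ((h'.u i - h.u i) + (h'.v i - h.v i))
  then ∏ i, ((Nat.choose (h'.u i) (h.u i) : ZMod 2) * (Nat.choose (h'.v i) (h.v i) : ZMod 2))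
  else 0

/-- The coefficient of `h'` in `∂h` as computed in Lemma 3.2: the sum of the inner, left
outer and right outer contributions (in particular, simultaneous left and right outer
contributions — which occur exactly when all entries of `x` are equal — cancel mod 2). -/
noncomputable def cellCoef {g m : ℕ} (h h' : ConfTuple g m) : ZMod 2 :=
  innerCoef h h' + leftCoef h h' + rightCoef h h'

/-- Partitions `k = Σ_{i=1}^g (u_i + v_i)` with `u_i, v_i ≥ 0`, indexing the copies of the
disc complex in the filtration stratum. -/
def Splittings (g k : ℕ) : Type :=
  {w : (Fin g → ℕ) × (Fin g → ℕ) // (∑ i, (w.1 i + w.2 i)) = k}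


section Aux
lemma ConfTuple.ext' {g m : ℕ} {a b : ConfTuple g m} (hx : a.x = b.x)
    (hu : a.u = b.u) (hv : a.v = b.v) : a = b := by
  cases a; cases b; simp_all

lemma fin0_eq (f g : Fin 0 → ℕ) : f = g := funext fun i => i.elim0

lemma merge_sum (x : List ℕ) (i : ℕ) (hi : i + 1 < x.length) :
    (x.take i ++ (x.getD i 0 + x.getD (i + 1) 0) :: x.drop (i + 2)).sum = x.sum := by
  have h1 : i < x.length := by omega
  rw [List.sum_append, List.sum_cons, List.getD_eq_getElem x 0 h1,
    List.getD_eq_getElem x 0 hi]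
  have := List.take_append_drop i x
  have h2 : x.drop i = x[i] :: x.drop (i+1) := List.drop_eq_getElem_cons h1
  have h3 : x.drop (i+1) = x[i+1] :: x.drop (i+2) := List.drop_eq_getElem_cons hi
  have key : x.sum = (x.take i).sum + (x[i] + (x[i+1] + (x.drop (i+2)).sum)) := by
    conv_lhs => rw [← List.take_append_drop i x]
    rw [List.sum_append, h2, h3, List.sum_cons, List.sum_cons]
  omega

lemma inner_norm {g m : ℕ} (h h' : ConfTuple g m) (hc : innerCoef h h' ≠ 0) :
    h'.fnorm = h.fnorm := by
  unfold innerCoef at hc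
  by_contra hne
  apply hc
  refine Finset.sum_eq_zero fun i _ => ?_
  rw [if_neg]
  rintro ⟨h1, -, -, h4⟩
  exact hne (by unfold ConfTuple.fnorm; rw [h4, merge_sum _ _ h1])

lemma left_norm {g m : ℕ} (h h' : ConfTuple g m) (hc : leftCoef h h' ≠ 0) :
    h'.fnorm < h.fnorm := by
  unfold leftCoef at hc
  rw [ne_eq, ite_eq_right_iff] at hc
  push_neg at hc
  obtain ⟨⟨hne, hx, -, -⟩, -⟩ := hc
  obtain ⟨a, t, he⟩ := List.exists_cons_of_ne_nil hne
  have ha : 1 ≤ a := h.x_pos a (he ▸ (List.mem_cons_self : a ∈ a :: t))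
  unfold ConfTuple.fnorm
  rw [hx, he]
  simp; omega

lemma right_norm {g m : ℕ} (h h' : ConfTuple g m) (hc : rightCoef h h' ≠ 0) :
    h'.fnorm < h.fnorm := by
  unfold rightCoef at hc
  rw [ne_eq, ite_eq_right_iff] at hc
  push_neg at hc
  obtain ⟨⟨hne, hx, -, -⟩, -⟩ := hc
  have hd : h.x.dropLast ++ [h.x.getLast hne] = h.x := List.dropLast_append_getLast hne
  have ha : 1 ≤ h.x.getLast hne := h.x_pos _ (List.getLast_mem hne)
  unfold ConfTuple.fnorm
  rw [hx, ← hd]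
  simp; omega
end Aux

section Aux2
lemma left_zero0 {p : ℕ} (d d' : ConfTuple 0 p) : leftCoef d d' = 0 := by
  unfold leftCoef
  rw [if_neg]
  rintro ⟨hne, -, -, h4⟩
  obtain ⟨a, t, he⟩ := List.exists_cons_of_ne_nil hne
  have ha : 1 ≤ a := d.x_pos a (he ▸ (List.mem_cons_self : a ∈ a :: t))
  rw [he] at h4
  simp at h4
  omega

lemma right_zero0 {p : ℕ} (d d' : ConfTuple 0 p) : rightCoef d d' = 0 := by
  unfold rightCoef
  rw [if_neg]
  rintro ⟨hne, -, -, h4⟩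
  have ha : 1 ≤ d.x.getLast hne := d.x_pos _ (List.getLast_mem hne)
  rw [List.getLastD_eq_getLast?, List.getLast?_eq_getLast hne] at h4
  simp at h4
  omega

lemma inner_eq_of {g m p : ℕ} (h h' : ConfTuple g m) (d d' : ConfTuple 0 p)
    (hx : d.x = h.x) (hx' : d'.x = h'.x) (hu : h'.u = h.u) (hv : h'.v = h.v) :
    innerCoef h h' = innerCoef d d' := by
  unfold innerCoef
  rw [hx, hx']
  refine Finset.sum_congr rfl fun i _ => ?_
  refine if_congr ?_ rfl rfl
  simp [hu, hv, fin0_eq d'.u d.u, fin0_eq d'.v d.v]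

lemma inner_zero_of_ne {g m : ℕ} (h h' : ConfTuple g m)
    (hne : ¬(h'.u = h.u ∧ h'.v = h.v)) : innerCoef h h' = 0 := by
  unfold innerCoef
  refine Finset.sum_eq_zero fun i _ => ?_
  rw [if_neg]
  rintro ⟨-, h2, h3, -⟩
  exact hne ⟨h2, h3⟩

noncomputable def strat (g m p : ℕ) (hp : p ≤ m) :
    {h : ConfTuple g m // h.fnorm = p} ≃ (Splittings g (m - p) × ConfTuple 0 p) where
  toFun h := (⟨(h.1.u, h.1.v), by
      show (∑ i, (h.1.u i + h.1.v i)) = m - p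
      have h1 := h.1.total
      have h2 := h.2
      unfold ConfTuple.fnorm at h2
      omega⟩,
    ⟨h.1.x, fun i => i.elim0, fun i => i.elim0, h.1.x_pos, by
      have h2 := h.2
      unfold ConfTuple.fnorm at h2
      simpa using h2⟩)
  invFun wd := ⟨⟨wd.2.x, wd.1.1.1, wd.1.1.2, wd.2.x_pos, by
      have h1 := wd.2.total
      have h2 := wd.1.2
      simp at h1
      omega⟩, by
      have h1 := wd.2.total
      unfold ConfTuple.fnorm
      simpa using h1⟩
  left_inv h := Subtype.ext (ConfTuple.ext' rfl rfl rfl)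
  right_inv wd := Prod.ext (Subtype.ext rfl)
    (ConfTuple.ext' rfl (fin0_eq _ _) (fin0_eq _ _))
end Aux2

/-- (i) The norm is weakly decreasing along the differential of the reduced
cellular chain complex of `C_m(Σ_{g,1})^∞`, so the tuples of norm `≤ p` span a subcomplex
`F_p`.  (ii) For every `p ≤ m` (for `p > m` the stratum is zero), the stratum `F_p / F_{p−1}` — spanned by the tuples of norm
exactly `p`, with the induced differential — is isomorphic to the direct sum, over all
partitions `m − p = Σ (u_i + v_i)`, of copies of the reduced cellular chain complex
`C̃_*(C_p(D)^∞)` of the disc (`g = 0`), with degrees shifted by `m − p`. -/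
theorem filtration_strata_are_disc_complexes (g m : ℕ) :
    (∀ h h' : ConfTuple g m, cellCoef h h' ≠ 0 → h'.fnorm ≤ h.fnorm) ∧
    ∀ p : ℕ, p ≤ m →
      ∃ e : {h : ConfTuple g m // h.fnorm = p} ≃ (Splittings g (m - p) × ConfTuple 0 p),
      (∀ h, h.1.dim = (e h).2.dim + (m - p)) ∧
      (∀ h h' : {h : ConfTuple g m // h.fnorm = p},
        cellCoef h.1 h'.1 =
          if (e h).1 = (e h').1 then cellCoef (e h).2 (e h').2 else 0) := by
  constructor
  · intro h h' hc
    unfold cellCoef at hc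
    by_contra hn
    push_neg at hn
    have h1 : innerCoef h h' = 0 := by
      by_contra hi; exact absurd (inner_norm h h' hi) (by omega)
    have h2 : leftCoef h h' = 0 := by
      by_contra hi; exact absurd (left_norm h h' hi) (by omega)
    have h3 : rightCoef h h' = 0 := by
      by_contra hi; exact absurd (right_norm h h' hi) (by omega)
    rw [h1, h2, h3] at hc
    simp at hc
  · intro p hp
    refine ⟨strat g m p hp, fun h => ?_, fun a b => ?_⟩
    · show ConfTuple.dim _ = ConfTuple.dim _ + (m - p)
      unfold ConfTuple.dim
      show m + h.1.x.length = p + h.1.x.length + (m - p)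
      omega
    · have hL : leftCoef a.1 b.1 = 0 := by
        by_contra hc
        have := left_norm _ _ hc
        rw [a.2, b.2] at this
        omega
      have hR : rightCoef a.1 b.1 = 0 := by
        by_contra hc
        have := right_norm _ _ hc
        rw [a.2, b.2] at this
        omega
      unfold cellCoef
      rw [hL, hR, left_zero0, right_zero0]; simp only [add_zero]
      by_cases hc : (strat g m p hp a).1 = (strat g m p hp b).1
      · rw [if_pos hc]
        have hval : (a.1.u, a.1.v) = (b.1.u, b.1.v) := congrArg Subtype.val hc
        rw [Prod.mk.injEq] at hval
        exact inner_eq_of a.1 b.1 ((strat g m p hp a).2) ((strat g m p hp b).2)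
          rfl rfl hval.1.symm hval.2.symm
      · rw [if_neg hc]
        apply inner_zero_of_ne
        rintro ⟨h1, h2⟩
        exact hc (Subtype.ext (by rw [Prod.mk.injEq]; exact ⟨h1.symm, h2.symm⟩))
end

section
/- Every generalised symmetric chain κ(p, α, u, v) is a cycle in the reduced cellular Z/2-chain complex C̃_*(C_m(Σ_{g,1})^∞): its inner boundaries cancel in pairs exactly as for Fuchs' symmetric chains in the disc, and the left outer boundary of each tuple (l, x, u, v) occurring in κ(p, α, u, v) cancels against the right outer boundary of the cyclically shifted tuple (l, x', u, v) with x'_l = x_1 and x'_i = x_{i+1}. -/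
open scoped Classical

/-- The generalised symmetric chain `κ(p, α, u₀, v₀)` (Definition 3.5), as a `ℤ/2`-valued
function on the tuples indexing the cells of `C_m(Σ_{g,1})^∞`: the (finite) sum of all
tuples `h = (l, x, u₀, v₀)` whose entries `x_i` are powers of `2`, with exactly `α j` entries
equal to `2^j` for every `j`. -/
noncomputable def genSymChain {g m : ℕ} (α : ℕ →₀ ℕ) (u₀ v₀ : Fin g → ℕ) :
    ConfTuple g m → ZMod 2 := fun h =>
  if h.u = u₀ ∧ h.v = v₀ ∧ (∀ a ∈ h.x, ∃ j : ℕ, a = 2 ^ j) ∧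
      (∀ j : ℕ, h.x.count (2 ^ j) = α j)
  then 1 else 0

/-! ### Auxiliary machinery -/

namespace Stmt5

variable {g m : ℕ}

lemma CT.ext {h₁ h₂ : ConfTuple g m} (hx : h₁.x = h₂.x) (hu : h₁.u = h₂.u)
    (hv : h₁.v = h₂.v) : h₁ = h₂ := by
  cases h₁; cases h₂; simp_all

lemma decomp (x : List ℕ) (i : ℕ) (hi : i + 1 < x.length) :
    x = x.take i ++ x.getD i 0 :: x.getD (i+1) 0 :: x.drop (i+2) := by
  have h1 : i < x.length := by omega
  rw [List.getD_eq_getElem _ _ h1, List.getD_eq_getElem _ _ hi]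
  conv_lhs => rw [← List.take_append_drop i x]
  congr 1
  rw [List.drop_eq_getElem_cons h1, List.drop_eq_getElem_cons hi]

lemma core_take (T D : List ℕ) (a b : ℕ) : (T ++ a :: b :: D).take T.length = T := by simp

lemma core_getD₁ (T D : List ℕ) (a b : ℕ) : (T ++ a :: b :: D).getD T.length 0 = a := by
  simp [List.getD_eq_getElem?_getD, List.getElem?_append_right]

lemma core_getD₂ (T D : List ℕ) (a b : ℕ) : (T ++ a :: b :: D).getD (T.length + 1) 0 = b := by
  simp [List.getD_eq_getElem?_getD, List.getElem?_append_right]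

lemma core_drop (T D : List ℕ) (a b : ℕ) : (T ++ a :: b :: D).drop (T.length + 2) = D := by
  simp [List.drop_append]

lemma core_len (T D : List ℕ) (a b : ℕ) :
    (T ++ a :: b :: D).length = T.length + D.length + 2 := by simp; omega

/-- Swap the entries at positions `i` and `i+1` of a list (identity if out of range). -/
def swapList (i : ℕ) (x : List ℕ) : List ℕ :=
  if i + 1 < x.length then x.take i ++ x.getD (i+1) 0 :: x.getD i 0 :: x.drop (i+2) else x

lemma swapList_decomp (T D : List ℕ) (a b : ℕ) :
    swapList T.length (T ++ a :: b :: D) = T ++ b :: a :: D := by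
  rw [swapList, if_pos (by rw [core_len]; omega), core_take, core_getD₁, core_getD₂, core_drop]

lemma swapList_of_not (i : ℕ) (x : List ℕ) (h : ¬ i + 1 < x.length) : swapList i x = x := by
  rw [swapList, if_neg h]

lemma exists_decomp (x : List ℕ) (i : ℕ) (hi : i + 1 < x.length) :
    ∃ T a b D, (T : List ℕ).length = i ∧ x = T ++ a :: b :: D := by
  exact ⟨x.take i, x.getD i 0, x.getD (i+1) 0, x.drop (i+2),
    by rw [List.length_take]; omega, decomp x i hi⟩

lemma swapList_perm (i : ℕ) (x : List ℕ) : List.Perm (swapList i x) x := by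
  by_cases hi : i + 1 < x.length
  · obtain ⟨T, a, b, D, hT, hx⟩ := exists_decomp x i hi
    rw [hx, ← hT, swapList_decomp]
    exact (List.perm_append_left_iff T).mpr (List.Perm.swap _ _ _)
  · rw [swapList_of_not i x hi]

/-- Swap the entries at positions `i`, `i+1` of the `x`-list of a tuple. -/
def swapCT (i : ℕ) (h : ConfTuple g m) : ConfTuple g m where
  x := swapList i h.x
  u := h.u
  v := h.v
  x_pos := fun a ha => h.x_pos a ((swapList_perm i h.x).mem_iff.mp ha)
  total := by rw [(swapList_perm i h.x).sum_eq]; exact h.total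

lemma swapCT_invol (i : ℕ) (h : ConfTuple g m) : swapCT i (swapCT i h) = h := by
  refine CT.ext ?_ rfl rfl
  show swapList i (swapList i h.x) = h.x
  by_cases hi : i + 1 < h.x.length
  · obtain ⟨T, a, b, D, hT, hx⟩ := exists_decomp h.x i hi
    rw [hx, ← hT, swapList_decomp, swapList_decomp]
  · rw [swapList_of_not i _ hi, swapList_of_not i _ hi]


/-- Cyclic left rotation of the `x`-list of a tuple. -/
def rotL (h : ConfTuple g m) : ConfTuple g m where
  x := h.x.rotate 1
  u := h.u
  v := h.v
  x_pos := fun a ha => h.x_pos a ((h.x.rotate_perm 1).mem_iff.mp ha)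
  total := by rw [(h.x.rotate_perm 1).sum_eq]; exact h.total

/-- Cyclic right rotation of the `x`-list of a tuple. -/
def rotR (h : ConfTuple g m) : ConfTuple g m where
  x := h.x.rotate (h.x.length - 1)
  u := h.u
  v := h.v
  x_pos := fun a ha => h.x_pos a ((h.x.rotate_perm _).mem_iff.mp ha)
  total := by rw [(h.x.rotate_perm _).sum_eq]; exact h.total

lemma rotR_rotL (h : ConfTuple g m) : rotR (rotL h) = h := by
  refine CT.ext ?_ rfl rfl
  show ((h.x.rotate 1).rotate ((h.x.rotate 1).length - 1)) = h.x
  rcases Nat.eq_zero_or_pos h.x.length with h0 | h0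
  · rw [List.length_eq_zero_iff.mp h0]; rfl
  · rw [List.rotate_rotate, List.length_rotate]
    have : 1 + (h.x.length - 1) = h.x.length := by omega
    rw [this, List.rotate_length]

lemma rotL_rotR (h : ConfTuple g m) : rotL (rotR h) = h := by
  refine CT.ext ?_ rfl rfl
  show ((h.x.rotate (h.x.length - 1)).rotate 1) = h.x
  rcases Nat.eq_zero_or_pos h.x.length with h0 | h0
  · rw [List.length_eq_zero_iff.mp h0]; rfl
  · rw [List.rotate_rotate]
    have : h.x.length - 1 + 1 = h.x.length := by omega
    rw [this, List.rotate_length]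

lemma rotL_cons (a : ℕ) (t : List ℕ) (u v x_pos total) :
    (rotL ⟨a :: t, u, v, x_pos, total⟩ : ConfTuple g m).x = t ++ [a] := by
  show (a :: t).rotate 1 = t ++ [a]
  rw [List.rotate_cons_succ, List.rotate_zero]

/-- The key left/right cancellation: the left outer coefficient of `h` equals the right
outer coefficient of its cyclic rotation. -/
lemma leftCoef_eq_rightCoef_rotL (h h' : ConfTuple g m) :
    leftCoef h h' = rightCoef (rotL h) h' := by
  rcases hx : h.x with _ | ⟨a, t⟩
  · rw [leftCoef, rightCoef, if_neg (by simp [hx]), if_neg ?_]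
    intro ⟨hne, _⟩
    exact hne (by show h.x.rotate 1 = []; rw [hx]; rfl)
  · have hrot : (rotL h).x = t ++ [a] := by
      show h.x.rotate 1 = t ++ [a]
      rw [hx, List.rotate_cons_succ, List.rotate_zero]
    have hu : (rotL h).u = h.u := rfl
    have hv : (rotL h).v = h.v := rfl
    rw [leftCoef, rightCoef, hrot, hu, hv, hx]
    simp only [List.dropLast_concat, List.getLastD_concat, List.tail_cons, List.headD_cons,
      ne_eq, reduceIte, List.cons_ne_nil, not_false_eq_true, List.append_ne_nil_of_right_ne_nil,
      true_and]


/-- The `i`-th summand of `innerCoef`. -/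
noncomputable def innerTerm (h h' : ConfTuple g m) (i : ℕ) : ZMod 2 :=
  if i + 1 < h.x.length ∧ h'.u = h.u ∧ h'.v = h.v ∧
      h'.x = h.x.take i ++ (h.x.getD i 0 + h.x.getD (i + 1) 0) :: h.x.drop (i + 2)
  then (Nat.choose (h.x.getD i 0 + h.x.getD (i + 1) 0) (h.x.getD i 0) : ZMod 2)
  else 0

lemma innerCoef_eq (h h' : ConfTuple g m) :
    innerCoef h h' = ∑ i ∈ Finset.range h.x.length, innerTerm h h' i := rfl

lemma innerTerm_decomp (h h' : ConfTuple g m) (T D : List ℕ) (a b : ℕ)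
    (hx : h.x = T ++ a :: b :: D) :
    innerTerm h h' T.length =
      if h'.u = h.u ∧ h'.v = h.v ∧ h'.x = T ++ (a + b) :: D
      then (Nat.choose (a + b) a : ZMod 2) else 0 := by
  rw [innerTerm, hx, core_take, core_getD₁, core_getD₂, core_drop]
  have hlt : T.length + 1 < (T ++ a :: b :: D).length := by rw [core_len]; omega
  simp only [and_iff_right hlt]

lemma innerTerm_swap (h h' : ConfTuple g m) (i : ℕ) :
    innerTerm (swapCT i h) h' i = innerTerm h h' i := by
  by_cases hi : i + 1 < h.x.length
  · obtain ⟨T, a, b, D, hT, hx⟩ := exists_decomp h.x i hi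
    subst hT
    have hsx : (swapCT T.length h).x = T ++ b :: a :: D := by
      show swapList T.length h.x = _
      rw [hx, swapList_decomp]
    rw [innerTerm_decomp _ _ _ _ _ _ hsx, innerTerm_decomp _ _ _ _ _ _ hx]
    have hu : (swapCT T.length h).u = h.u := rfl
    have hv : (swapCT T.length h).v = h.v := rfl
    rw [hu, hv, Nat.add_comm b a, ← Nat.choose_symm_add]
  · have : swapCT i h = h := CT.ext (swapList_of_not i h.x hi) rfl rfl
    rw [this]

lemma swapCT_ne_of_innerTerm_ne (h h' : ConfTuple g m) (i : ℕ)
    (hne : innerTerm h h' i ≠ 0) : swapCT i h ≠ h := by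
  intro heq
  by_cases hi : i + 1 < h.x.length
  · obtain ⟨T, a, b, D, hT, hx⟩ := exists_decomp h.x i hi
    subst hT
    have hsx : swapList T.length h.x = T ++ b :: a :: D := by rw [hx, swapList_decomp]
    have heq' : T ++ b :: a :: D = T ++ a :: b :: D := by
      rw [← hsx, ← hx]; exact congrArg ConfTuple.x heq
    have hab : a = b := by
      have := List.append_cancel_left heq'
      simp at this
      exact this.1.symm
    have ha : 1 ≤ a := h.x_pos a (by rw [hx]; simp)
    rw [innerTerm_decomp _ _ _ _ _ _ hx] at hne
    apply hne
    rw [← hab]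
    split
    · rw [show a + a = 2 * a by omega, ← Nat.centralBinom_eq_two_mul_choose]
      exact (ZMod.natCast_eq_zero_iff _ 2).mpr
        (Nat.two_dvd_centralBinom_of_one_le ha)
    · rfl
  · exact hne (by rw [innerTerm, if_neg (fun hc => hi hc.1)])


/-- The defining predicate of the generalised symmetric chain. -/
def P (α : ℕ →₀ ℕ) (u₀ v₀ : Fin g → ℕ) (h : ConfTuple g m) : Prop :=
  h.u = u₀ ∧ h.v = v₀ ∧ (∀ a ∈ h.x, ∃ j : ℕ, a = 2 ^ j) ∧ (∀ j : ℕ, h.x.count (2 ^ j) = α j)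

lemma genSymChain_eq (α : ℕ →₀ ℕ) (u₀ v₀ : Fin g → ℕ) (h : ConfTuple g m) :
    genSymChain α u₀ v₀ h = if P α u₀ v₀ h then 1 else 0 := by
  unfold genSymChain P
  split <;> rfl

lemma P_of_perm {α : ℕ →₀ ℕ} {u₀ v₀ : Fin g → ℕ} {h₁ h₂ : ConfTuple g m}
    (hp : P α u₀ v₀ h₁) (hperm : List.Perm h₂.x h₁.x)
    (hu : h₂.u = h₁.u) (hv : h₂.v = h₁.v) : P α u₀ v₀ h₂ :=
  ⟨hu.trans hp.1, hv.trans hp.2.1, fun a ha => hp.2.2.1 a (hperm.mem_iff.mp ha),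
    fun j => (hperm.count_eq _).trans (hp.2.2.2 j)⟩

lemma perm_of_P {α : ℕ →₀ ℕ} {u₀ v₀ : Fin g → ℕ} {h₁ h₂ : ConfTuple g m}
    (h1 : P α u₀ v₀ h₁) (h2 : P α u₀ v₀ h₂) : List.Perm h₁.x h₂.x := by
  rw [List.perm_iff_count]
  intro a
  by_cases ha : ∃ j : ℕ, a = 2 ^ j
  · obtain ⟨j, rfl⟩ := ha
    rw [h1.2.2.2 j, h2.2.2.2 j]
  · rw [List.count_eq_zero.mpr (fun hm => ha (h1.2.2.1 a hm)),
      List.count_eq_zero.mpr (fun hm => ha (h2.2.2.1 a hm))]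

lemma P_finite (α : ℕ →₀ ℕ) (u₀ v₀ : Fin g → ℕ) :
    {h : ConfTuple g m | P α u₀ v₀ h}.Finite := by
  rcases Set.eq_empty_or_nonempty {h : ConfTuple g m | P α u₀ v₀ h} with he | ⟨h₀, h₀mem⟩
  · rw [he]; exact Set.finite_empty
  · apply Set.Finite.of_finite_image (f := ConfTuple.x)
    · apply Set.Finite.subset h₀.x.permutations.toFinset.finite_toSet
      rintro y ⟨h, hmemh, rfl⟩
      simp only [Finset.coe_sort_coe, Finset.mem_coe, List.mem_toFinset, List.mem_permutations]
      exact perm_of_P hmemh h₀mem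
    · intro h₁ hm1 h₂ hm2 hx
      exact CT.ext hx (hm1.1.trans hm2.1.symm) (hm1.2.1.trans hm2.2.1.symm)

end Stmt5


/-- If `p = Σ_j α_j 2^j` and `m = p + Σ_i (u_i + v_i)`, then the
generalised symmetric chain `κ(p, α, u, v)` is a cycle of the reduced cellular
`ℤ/2`-chain complex of `C_m(Σ_{g,1})^∞`: for every tuple `h'`, the total coefficient of
`h'` in the boundary of `κ(p, α, u, v)` vanishes. -/
theorem generalised_symmetric_chain_is_cycle
    (g m p : ℕ) (α : ℕ →₀ ℕ) (u₀ v₀ : Fin g → ℕ)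
    (hp : p = α.sum fun j a => a * 2 ^ j)
    (hm : m = p + ∑ i, (u₀ i + v₀ i))
    (h' : ConfTuple g m) :
    ∑ᶠ h : ConfTuple g m, genSymChain α u₀ v₀ h * cellCoef h h' = 0 := by
  classical
  have hfin : {h : ConfTuple g m | Stmt5.P α u₀ v₀ h}.Finite := Stmt5.P_finite α u₀ v₀
  set s : Finset (ConfTuple g m) := hfin.toFinset with hs
  have hmem : ∀ {h : ConfTuple g m}, h ∈ s ↔ Stmt5.P α u₀ v₀ h := fun {h} => hfin.mem_toFinset
  have hsum : ∑ᶠ h : ConfTuple g m, genSymChain α u₀ v₀ h * cellCoef h h'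
      = ∑ h ∈ s, cellCoef h h' := by
    rw [finsum_eq_finset_sum_of_support_subset]
    · exact Finset.sum_congr rfl fun h hh => by
        rw [Stmt5.genSymChain_eq, if_pos (hmem.mp hh), one_mul]
    · intro h hh
      simp only [Function.mem_support] at hh
      have hg : genSymChain α u₀ v₀ h ≠ 0 := fun e => hh (by rw [e, zero_mul])
      rw [Stmt5.genSymChain_eq] at hg
      by_contra hns
      exact hg (if_neg fun hP => hns (Finset.mem_coe.mpr (hmem.mpr hP)))
  rw [hsum]
  have hsplit : ∑ h ∈ s, cellCoef h h'
      = (∑ h ∈ s, innerCoef h h') + (∑ h ∈ s, leftCoef h h') + (∑ h ∈ s, rightCoef h h') := by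
    rw [← Finset.sum_add_distrib, ← Finset.sum_add_distrib]
    exact Finset.sum_congr rfl fun h _ => rfl
  rw [hsplit]
  have hLR : ∑ h ∈ s, leftCoef h h' = ∑ h ∈ s, rightCoef h h' := by
    refine Finset.sum_nbij' Stmt5.rotL Stmt5.rotR
      (fun h hh => hmem.mpr (Stmt5.P_of_perm (hmem.mp hh) (h.x.rotate_perm 1) rfl rfl))
      (fun h hh => hmem.mpr (Stmt5.P_of_perm (hmem.mp hh) (h.x.rotate_perm _) rfl rfl))
      (fun h _ => Stmt5.rotR_rotL h) (fun h _ => Stmt5.rotL_rotR h)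
      (fun h _ => Stmt5.leftCoef_eq_rightCoef_rotL h h')
  have hInner : ∑ h ∈ s, innerCoef h h' = 0 := by
    rcases s.eq_empty_or_nonempty with he | ⟨h₀, h₀s⟩
    · rw [he]; simp
    · have hP₀ := hmem.mp h₀s
      have hlen : ∀ h ∈ s, h.x.length = h₀.x.length := fun h hh =>
        (Stmt5.perm_of_P (hmem.mp hh) hP₀).length_eq
      have step1 : ∑ h ∈ s, innerCoef h h'
          = ∑ q ∈ s ×ˢ Finset.range h₀.x.length, Stmt5.innerTerm q.1 h' q.2 := by
        rw [Finset.sum_product]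
        exact Finset.sum_congr rfl fun h hh => by rw [Stmt5.innerCoef_eq, hlen h hh]
      rw [step1]
      refine Finset.sum_involution (fun q _ => (Stmt5.swapCT q.2 q.1, q.2)) ?_ ?_ ?_ ?_
      · intro q _
        rw [Stmt5.innerTerm_swap]
        exact CharTwo.add_self_eq_zero _
      · intro q _ hne he
        exact Stmt5.swapCT_ne_of_innerTerm_ne q.1 h' q.2 hne (congrArg Prod.fst he)
      · intro q hq
        rw [Finset.mem_product] at hq ⊢
        exact ⟨hmem.mpr (Stmt5.P_of_perm (hmem.mp hq.1)
          (Stmt5.swapList_perm q.2 q.1.x) rfl rfl), hq.2⟩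
      · intro q _
        exact Prod.ext (Stmt5.swapCT_invol q.2 q.1) rfl
  rw [hInner, hLR, zero_add]
  exact CharTwo.add_self_eq_zero _
end
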